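/- Let s : U → ℂ be continuously differentiable on an open set U ⊆ ℂ², V ⊆ ℂ² open, Z : V → ℂ differentiable solving the midpoint equation s(x, Z(x,y)) + s(y, Z(x,y)) = 0 on V, with all points (x, Z(x,y)), (y, Z(x,y)), (Z(x,y), y) in U and with s₂(x, Z(x,y)) + s₂(y, Z(x,y)) ≠ 0 on V. Define ψ_w(x,y) = ∂₁w(x,y)x² + ∂₂w(x,y)y² + 2w(x,y)y for differentiable w, the prerenormalization P(x,y) := s(Z(x,y), y), and δZ(x,y) := −(ψ_s(x, Z(x,y)) + ψ_s(y, Z(x,y)))/(s₂(x, Z(x,y)) + s₂(y, Z(x,y))). Then for all (x,y) ∈ V: s₁(Z(x,y), y)·δZ(x,y) + ψ_s(Z(x,y), y) = ψ_P(x,y). (That is, the directional derivative of the prerenormalization operator at s in the direction ψ_s equals ψ evaluated at the prerenormalization of s.) -/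

import Mathlib

/-- The directional derivative of the prerenormalization operator
`P(x,y) = s(Z(x,y), y)` at `s` in the direction `ψ_s` equals `ψ` evaluated at the
prerenormalization of `s`:
`s₁(Z,y)·δZ + ψ_s(Z,y) = ψ_P(x,y)`, where `Z` solves the midpoint equation,
`ψ_w(x,y) = ∂₁w·x² + ∂₂w·y² + 2wy` and
`δZ = -(ψ_s(x,Z) + ψ_s(y,Z))/(s₂(x,Z) + s₂(y,Z))`. -/
theorem prerenormalization_derivative_in_direction_psi
    (U V : Set (ℂ × ℂ)) (hU : IsOpen U) (hV : IsOpen V)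
    (s : ℂ × ℂ → ℂ) (hs : ContDiffOn ℂ 1 s U)
    (Z : ℂ × ℂ → ℂ) (hZ : DifferentiableOn ℂ Z V)
    (hm1 : ∀ p ∈ V, (p.1, Z p) ∈ U) (hm2 : ∀ p ∈ V, (p.2, Z p) ∈ U)
    (hm3 : ∀ p ∈ V, ((Z p, p.2) : ℂ × ℂ) ∈ U)
    (hmid : ∀ p ∈ V, s (p.1, Z p) + s (p.2, Z p) = 0)
    (s₁ s₂ : ℂ × ℂ → ℂ)
    (hs₁ : ∀ q ∈ U, s₁ q = fderiv ℂ s q (1, 0))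
    (hs₂ : ∀ q ∈ U, s₂ q = fderiv ℂ s q (0, 1))
    (hnz : ∀ p ∈ V, s₂ (p.1, Z p) + s₂ (p.2, Z p) ≠ 0)
    (ψs : ℂ × ℂ → ℂ)
    (hψs : ∀ q ∈ U, ψs q = s₁ q * q.1 ^ 2 + s₂ q * q.2 ^ 2 + 2 * s q * q.2)
    (P : ℂ × ℂ → ℂ) (hP : ∀ p : ℂ × ℂ, P p = s (Z p, p.2))
    (δZ : ℂ × ℂ → ℂ)
    (hδZ : ∀ p ∈ V, δZ p
        = -(ψs (p.1, Z p) + ψs (p.2, Z p)) / (s₂ (p.1, Z p) + s₂ (p.2, Z p))) :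
    ∀ p ∈ V,
      s₁ (Z p, p.2) * δZ p + ψs (Z p, p.2)
        = fderiv ℂ P p (1, 0) * p.1 ^ 2 + fderiv ℂ P p (0, 1) * p.2 ^ 2
          + 2 * P p * p.2 := by
  intro p hp
  have hVp : V ∈ nhds p := hV.mem_nhds hp
  have hsd : ∀ q ∈ U, DifferentiableAt ℂ s q := fun q hq =>
    ((hs.differentiableOn one_ne_zero) q hq).differentiableAt (hU.mem_nhds hq)
  have hZp : DifferentiableAt ℂ Z p := (hZ p hp).differentiableAt hVp
  set L := fderiv ℂ Z p with hLdef
  have hLZ : HasFDerivAt Z L p := hZp.hasFDerivAt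
  set A := fderiv ℂ s (p.1, Z p) with hA
  set B := fderiv ℂ s (p.2, Z p) with hB
  set C := fderiv ℂ s (Z p, p.2) with hC
  have hM1 : HasFDerivAt (fun q : ℂ × ℂ => (q.1, Z q))
      ((ContinuousLinearMap.fst ℂ ℂ ℂ).prod L) p := HasFDerivAt.prodMk (hasFDerivAt_fst) hLZ
  have hM2 : HasFDerivAt (fun q : ℂ × ℂ => (q.2, Z q))
      ((ContinuousLinearMap.snd ℂ ℂ ℂ).prod L) p := HasFDerivAt.prodMk (hasFDerivAt_snd) hLZ
  have hM3 : HasFDerivAt (fun q : ℂ × ℂ => (Z q, q.2))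
      (L.prod (ContinuousLinearMap.snd ℂ ℂ ℂ)) p := HasFDerivAt.prodMk hLZ (hasFDerivAt_snd)
  have h1 : HasFDerivAt (fun q : ℂ × ℂ => s (q.1, Z q))
      (A.comp ((ContinuousLinearMap.fst ℂ ℂ ℂ).prod L)) p :=
    ((hsd _ (hm1 p hp)).hasFDerivAt).comp p hM1
  have h2 : HasFDerivAt (fun q : ℂ × ℂ => s (q.2, Z q))
      (B.comp ((ContinuousLinearMap.snd ℂ ℂ ℂ).prod L)) p :=
    ((hsd _ (hm2 p hp)).hasFDerivAt).comp p hM2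
  have h3 : HasFDerivAt (fun q : ℂ × ℂ => s (Z q, q.2))
      (C.comp (L.prod (ContinuousLinearMap.snd ℂ ℂ ℂ))) p :=
    ((hsd _ (hm3 p hp)).hasFDerivAt).comp p hM3
  have hPfun : P = fun q : ℂ × ℂ => s (Z q, q.2) := funext hP
  have hPder : fderiv ℂ P p = C.comp (L.prod (ContinuousLinearMap.snd ℂ ℂ ℂ)) := by
    rw [hPfun]; exact h3.fderiv
  have heq : (fun q : ℂ × ℂ => s (q.1, Z q) + s (q.2, Z q)) =ᶠ[nhds p]
      (fun _ => (0 : ℂ)) :=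
    Filter.eventually_of_mem hVp (fun q hq => hmid q hq)
  have h0 : HasFDerivAt (fun q : ℂ × ℂ => s (q.1, Z q) + s (q.2, Z q))
      (0 : (ℂ × ℂ) →L[ℂ] ℂ) p :=
    (hasFDerivAt_const (0 : ℂ) p).congr_of_eventuallyEq heq
  have key : A.comp ((ContinuousLinearMap.fst ℂ ℂ ℂ).prod L)
      + B.comp ((ContinuousLinearMap.snd ℂ ℂ ℂ).prod L) = 0 :=
    (h1.add h2).unique h0
  have lin : ∀ (T : (ℂ × ℂ) →L[ℂ] ℂ) (x z : ℂ),
      T (x, z) = x * T (1, 0) + z * T (0, 1) := by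
    intro T x z
    have hxz : (x, z) = x • ((1 : ℂ), (0 : ℂ)) + z • ((0 : ℂ), (1 : ℂ)) := by
      simp [Prod.ext_iff]
    rw [hxz, map_add, map_smul, map_smul, smul_eq_mul, smul_eq_mul]
  have e1 := DFunLike.congr_fun key ((1 : ℂ), (0 : ℂ))
  have e2 := DFunLike.congr_fun key ((0 : ℂ), (1 : ℂ))
  simp only [ContinuousLinearMap.add_apply, ContinuousLinearMap.comp_apply,
    ContinuousLinearMap.prod_apply, ContinuousLinearMap.coe_fst',
    ContinuousLinearMap.coe_snd', ContinuousLinearMap.zero_apply] at e1 e2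
  -- scalar names
  set L1 := L ((1 : ℂ), (0 : ℂ)) with hL1
  set L2 := L ((0 : ℂ), (1 : ℂ)) with hL2
  rw [lin A 1 L1, lin B 0 L1] at e1
  rw [lin A 0 L2, lin B 1 L2] at e2
  have ha1 : s₁ (p.1, Z p) = A (1, 0) := by rw [hs₁ _ (hm1 p hp)]
  have ha2 : s₂ (p.1, Z p) = A (0, 1) := by rw [hs₂ _ (hm1 p hp)]
  have hb1 : s₁ (p.2, Z p) = B (1, 0) := by rw [hs₁ _ (hm2 p hp)]
  have hb2 : s₂ (p.2, Z p) = B (0, 1) := by rw [hs₂ _ (hm2 p hp)]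
  have hc1 : s₁ (Z p, p.2) = C (1, 0) := by rw [hs₁ _ (hm3 p hp)]
  have hc2 : s₂ (Z p, p.2) = C (0, 1) := by rw [hs₂ _ (hm3 p hp)]
  have hD : A (0, 1) + B (0, 1) ≠ 0 := by
    rw [← ha2, ← hb2]; exact hnz p hp
  have hsum : s (p.1, Z p) + s (p.2, Z p) = 0 := hmid p hp
  have hP1 : fderiv ℂ P p ((1 : ℂ), (0 : ℂ)) = L1 * C (1, 0) := by
    rw [hPder]
    simp only [ContinuousLinearMap.comp_apply, ContinuousLinearMap.prod_apply,
      ContinuousLinearMap.coe_snd', ← hL1]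
    rw [lin C L1 0]; ring
  have hP2 : fderiv ℂ P p ((0 : ℂ), (1 : ℂ)) = L2 * C (1, 0) + C (0, 1) := by
    rw [hPder]
    simp only [ContinuousLinearMap.comp_apply, ContinuousLinearMap.prod_apply,
      ContinuousLinearMap.coe_snd', ← hL2]
    rw [lin C L2 1]; ring
  have hδval : δZ p = L1 * p.1 ^ 2 + L2 * p.2 ^ 2 - Z p ^ 2 := by
    rw [hδZ p hp, hψs _ (hm1 p hp), hψs _ (hm2 p hp), ha1, ha2, hb1, hb2]
    rw [div_eq_iff hD]
    linear_combination (-(p.1 ^ 2)) * e1 + (-(p.2 ^ 2)) * e2 + (-(2 * Z p)) * hsum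
  rw [hδval, hψs _ (hm3 p hp), hP p, hP1, hP2, hc1, hc2]
  simp only
  ring
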